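/- Let M, N ∈ ℕ with M ≥ 1, N ≥ 1, let K ∈ ℕ with K > M, set λ = 1/K and ρ = λ·(1 − M·λ), and let ε ≥ 0. Suppose G : ℕ → ℝ satisfies G(0) ≥ 0 and G(k+1) ≤ (1 − ρ)·G(k) + (4MN + 2M)·ρ·ε for all k < K. Then G(K) ≤ e^{M·λ − 1} · G(0) + (4MN + 2M)·ε. In particular, if G(0) = f_OPT ≥ 0 and F := f_OPT − G(K), then F ≥ (1 − e^{M·λ}/e)·f_OPT − (4MN + 2M)·ε. -/

import Mathlib

/-- Noisy continuous-greedy gap bound with step size `λ = 1/K` and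
progress factor `ρ = λ(1 − Mλ)`: unrolling the recurrence yields
`G(K) ≤ e^{Mλ−1} G(0) + (4MN + 2M)ε`, and hence for `G(0) = f_OPT ≥ 0` and
`F = f_OPT − G(K)` we get `F ≥ (1 − e^{Mλ}/e) f_OPT − (4MN + 2M)ε`. -/
theorem noisy_cg_gap_bound
    (M N : ℕ) (hM : 1 ≤ M) (hN : 1 ≤ N) (K : ℕ) (hK : M < K)
    (ε : ℝ) (hε : 0 ≤ ε) (G : ℕ → ℝ) (hG0 : 0 ≤ G 0)
    (hrec : ∀ k < K,
      G (k + 1) ≤ (1 - (1 / (K : ℝ)) * (1 - (M : ℝ) * (1 / (K : ℝ)))) * G k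
        + ((4 * M * N + 2 * M : ℕ) : ℝ) * ((1 / (K : ℝ)) * (1 - (M : ℝ) * (1 / (K : ℝ)))) * ε) :
    G K ≤ Real.exp ((M : ℝ) * (1 / (K : ℝ)) - 1) * G 0 + ((4 * M * N + 2 * M : ℕ) : ℝ) * ε ∧
    (∀ fOPT : ℝ, G 0 = fOPT → 0 ≤ fOPT →
      fOPT - G K ≥ (1 - Real.exp ((M : ℝ) * (1 / (K : ℝ))) / Real.exp 1) * fOPT
        - ((4 * M * N + 2 * M : ℕ) : ℝ) * ε) := by
  have hK0 : (0:ℝ) < K := by exact_mod_cast Nat.pos_of_ne_zero (by omega)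
  have hKne : (K:ℝ) ≠ 0 := ne_of_gt hK0
  set ρ : ℝ := (1 / (K : ℝ)) * (1 - (M : ℝ) * (1 / (K : ℝ))) with hρ
  set C : ℝ := ((4 * M * N + 2 * M : ℕ) : ℝ) with hC
  have hMK : (M:ℝ) < K := by exact_mod_cast hK
  have hρpos : 0 ≤ ρ := by
    apply mul_nonneg (by positivity)
    have : (M:ℝ) * (1/(K:ℝ)) < 1 := by
      rw [mul_one_div, div_lt_one hK0]; exact hMK
    linarith
  have hρle : ρ ≤ 1 := by
    have h1 : 1 - (M:ℝ) * (1/(K:ℝ)) ≤ 1 := by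
      have : 0 ≤ (M:ℝ) * (1/(K:ℝ)) := by positivity
      linarith
    have h2 : (1:ℝ)/(K:ℝ) ≤ 1 := by
      rw [div_le_one hK0]; exact_mod_cast Nat.one_le_iff_ne_zero.mpr (by omega)
    have h3 : 0 ≤ 1 - (M:ℝ) * (1/(K:ℝ)) := by
      have : (M:ℝ) * (1/(K:ℝ)) < 1 := by rw [mul_one_div, div_lt_one hK0]; exact hMK
      linarith
    calc ρ ≤ 1 * 1 := mul_le_mul h2 h1 h3 (by norm_num)
      _ = 1 := by norm_num
  have hCpos : 0 ≤ C := by positivity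
  have key : ∀ k, k ≤ K → G k ≤ (1 - ρ)^k * G 0 + C * ε := by
    intro k hk
    induction k with
    | zero => simp; positivity
    | succ n ih =>
      have hn : n < K := by omega
      have ih' := ih (by omega)
      have hrecn := hrec n hn
      have h1ρ : 0 ≤ 1 - ρ := by linarith
      calc G (n+1) ≤ (1 - ρ) * G n + C * ρ * ε := hrecn
        _ ≤ (1 - ρ) * ((1 - ρ)^n * G 0 + C * ε) + C * ρ * ε := by
            gcongr
        _ = (1 - ρ)^(n+1) * G 0 + C * ε := by ring
  have hexp : (1 - ρ)^K ≤ Real.exp ((M:ℝ) * (1/(K:ℝ)) - 1) := by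
    have h1 : 1 - ρ ≤ Real.exp (-ρ) := by
      have := Real.add_one_le_exp (-ρ); linarith
    have h2 : (1 - ρ)^K ≤ (Real.exp (-ρ))^K := pow_le_pow_left₀ (by linarith) h1 K
    rw [← Real.exp_nat_mul] at h2
    have heq : (K:ℝ) * (-ρ) = (M:ℝ) * (1/(K:ℝ)) - 1 := by
      rw [hρ]; field_simp; ring
    rwa [heq] at h2
  have main : G K ≤ Real.exp ((M:ℝ) * (1/(K:ℝ)) - 1) * G 0 + C * ε := by
    have := key K le_rfl
    have : (1-ρ)^K * G 0 ≤ Real.exp ((M:ℝ) * (1/(K:ℝ)) - 1) * G 0 :=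
      mul_le_mul_of_nonneg_right hexp hG0
    linarith [key K le_rfl]
  refine ⟨main, ?_⟩
  intro fOPT h0 hf
  have hCε : C * ε ≤ C * ε := le_rfl
  have hediv : Real.exp ((M:ℝ) * (1/(K:ℝ)) - 1) = Real.exp ((M:ℝ) * (1/(K:ℝ))) / Real.exp 1 := by
    rw [Real.exp_sub]
  rw [h0] at main
  rw [hediv] at main
  nlinarith [main]
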